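/- Let C ⊆ K be fields and k_0, k_1, k_2, ... elements of K satisfying the recursion k_n = -k_{n-1}c_1 - ... - k_{n-s}c_s for all n ≥ s, where (c_1,...,c_s) ∈ C^s is fixed. Assume that for every m < s there is no ξ ∈ C^m with k_m + k_{m-1}ξ_1 + ... + k_0 ξ_m = 0. Then for every n > s the C-vector space V_n = {ξ ∈ C^n : k_{n-1}ξ_1 + k_{n-2}ξ_2 + ... + k_0 ξ_n = 0} has dimension n - s. -/

import Mathlib

open Submodule Set

private lemma range_fin_succ_eq {K : Type*} (k : ℕ → K) (n : ℕ) :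
    Set.range (fun i : Fin (n + 1) => k (i : ℕ)) =
      insert (k n) (Set.range (fun i : Fin n => k (i : ℕ))) := by
  ext x
  constructor
  · rintro ⟨i, rfl⟩
    refine Fin.lastCases ?_ ?_ i
    · exact Or.inl (by simp)
    · intro j; exact Or.inr ⟨j, by simp⟩
  · rintro (rfl | ⟨i, rfl⟩)
    · exact ⟨Fin.last n, rfl⟩
    · exact ⟨i.castSucc, rfl⟩

private lemma range_rev_eq {K : Type*} (k : ℕ → K) (n : ℕ) :
    Set.range (fun i : Fin n => k (n - 1 - (i : ℕ))) =
      Set.range (fun i : Fin n => k (i : ℕ)) := by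
  have : (fun i : Fin n => k (n - 1 - (i : ℕ))) = (fun i : Fin n => k (i : ℕ)) ∘ Fin.rev := by
    funext i
    simp [Fin.rev, Function.comp]
    congr 1
    omega
  rw [this, Set.range_comp, Fin.rev_surjective.range_eq, Set.image_univ]

/-- let `C ⊆ K` be fields and `k₀, k₁, …` elements of `K` satisfying
`k_n = -k_{n-1}c₁ - ⋯ - k_{n-s}c_s` for all `n ≥ s`, with `(c₁,…,c_s) ∈ Cˢ` fixed.
If for every `m < s` there is no `ξ ∈ Cᵐ` with `k_m + k_{m-1}ξ₁ + ⋯ + k₀ξ_m = 0`,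
then for every `n > s` the `C`-vector space
`V_n = {ξ ∈ Cⁿ : k_{n-1}ξ₁ + ⋯ + k₀ξ_n = 0}` has dimension `n - s`. -/
theorem flag_space_dimension {C K : Type*} [Field C] [Field K] [Algebra C K]
    (k : ℕ → K) (s : ℕ) (hs : 1 ≤ s) (c : Fin s → C)
    (hrec : ∀ n, s ≤ n →
      k n = -∑ j : Fin s, k (n - 1 - (j : ℕ)) * algebraMap C K (c j))
    (hmin : ∀ m, m < s →
      ¬∃ ξ : Fin m → C,
        k m + ∑ i : Fin m, k (m - 1 - (i : ℕ)) * algebraMap C K (ξ i) = 0)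
    (n : ℕ) (hn : s < n) :
    Module.finrank C
      ↥(LinearMap.ker
        (Fintype.linearCombination C (fun i : Fin n => k (n - 1 - (i : ℕ))))) =
      n - s := by
  -- k m is not in the span of the earlier k's
  have hnotmem : ∀ m, m < s →
      k m ∉ Submodule.span C (Set.range (fun i : Fin m => k (i : ℕ))) := by
    intro m hm hmem
    rw [mem_span_range_iff_exists_fun] at hmem
    obtain ⟨ξ, hξ⟩ := hmem
    apply hmin m hm
    refine ⟨fun i => -ξ i.rev, ?_⟩
    have h1 : ∑ i : Fin m, k (m - 1 - (i : ℕ)) * algebraMap C K (-ξ i.rev)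
        = -∑ i : Fin m, ξ i • k (i : ℕ) := by
      rw [← Finset.sum_neg_distrib]
      refine Fintype.sum_equiv Fin.revPerm _ _ ?_
      intro i
      have hv : ((Fin.rev i : Fin m) : ℕ) = m - 1 - (i : ℕ) := by
        simp [Fin.rev]; omega
      simp only [Fin.revPerm_apply, ← hv, map_neg, mul_neg, Algebra.smul_def, mul_comm]
    rw [h1, hξ]
    ring
  -- linear independence of k₀, …, k_{s-1}
  have hli : ∀ t, t ≤ s → LinearIndependent C (fun i : Fin t => k (i : ℕ)) := by
    intro t
    induction t with
    | zero => intro _; exact linearIndependent_empty_type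
    | succ t ih =>
      intro ht
      have heq : (fun i : Fin (t + 1) => k (i : ℕ)) =
          Fin.snoc (fun i : Fin t => k (i : ℕ)) (k t) := by
        funext i
        refine Fin.lastCases ?_ ?_ i
        · simp
        · intro j; simp
      rw [heq, linearIndependent_fin_snoc]
      exact ⟨ih (le_of_lt ht), hnotmem t ht⟩
  -- span stability: for n ≥ s, the span of k₀,…,k_{n-1} equals span of k₀,…,k_{s-1}
  have hspan : ∀ m, s ≤ m →
      Submodule.span C (Set.range (fun i : Fin m => k (i : ℕ))) =
      Submodule.span C (Set.range (fun i : Fin s => k (i : ℕ))) := by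
    intro m hm
    induction m with
    | zero => omega
    | succ m ih =>
      rcases eq_or_lt_of_le hm with h | h
      · rw [← h]
      · have hm' : s ≤ m := by omega
        have hmem : k m ∈ Submodule.span C (Set.range (fun i : Fin m => k (i : ℕ))) := by
          rw [hrec m hm']
          refine neg_mem (Submodule.sum_mem _ ?_)
          intro j _
          have hj : (m - 1 - (j : ℕ)) < m := by
            have := j.isLt; omega
          have hk : k (m - 1 - (j : ℕ)) ∈
              Submodule.span C (Set.range (fun i : Fin m => k (i : ℕ))) :=
            Submodule.subset_span ⟨⟨m - 1 - (j : ℕ), hj⟩, rfl⟩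
          rw [mul_comm, ← Algebra.smul_def]
          exact Submodule.smul_mem _ _ hk
        rw [range_fin_succ_eq, Submodule.span_insert_eq_span hmem, ih hm']
  -- compute the rank of the range
  have hrange : Module.finrank C
      ↥(LinearMap.range (Fintype.linearCombination C (fun i : Fin n => k (n - 1 - (i : ℕ))))) = s := by
    rw [Fintype.range_linearCombination, range_rev_eq, hspan n (le_of_lt hn),
      finrank_span_eq_card (hli s le_rfl), Fintype.card_fin]
  have hrn := LinearMap.finrank_range_add_finrank_ker
    (Fintype.linearCombination C (fun i : Fin n => k (n - 1 - (i : ℕ))))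
  rw [hrange, Module.finrank_pi, Fintype.card_fin] at hrn
  omega
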